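/- arXiv:1908.08214 — 5 statements merged into one kernel-verified Lean document; each statement's English description precedes it below -/
import Mathlib

section
/- Let F be a finitely generated free group, φ : F → F an injective endomorphism, H' ≤ F a finite-index subgroup, and suppose j > k ≥ 0 satisfy φ^{-k}(H') = φ^{-j}(H'). Set K = φ^{-k}(H'). Then φ^{j-k}(K) ≤ K, and the induced map on left cosets φ̄ : F/K → F/K sending gK to φ^{j-k}(g)K is a well-defined bijection of the finite set F/K. -/
/-- With `K = φ^{-k}(H')` and `φ^{-k}(H') = φ^{-j}(H')`, `φ^{j-k}(K) ≤ K` and the induced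
map on left cosets `F/K` is a well-defined bijection of a finite set. -/
theorem stmt_2 {G : Type*} [Group G] [IsFreeGroup G] [Group.FG G]
    (φ : Monoid.End G) (hφ : Function.Injective φ)
    (H' : Subgroup G) (hH' : H'.FiniteIndex) (k j : ℕ) (hkj : k < j)
    (heq : H'.comap (φ ^ k : Monoid.End G) = H'.comap (φ ^ j : Monoid.End G))
    (K : Subgroup G) (hK : K = H'.comap (φ ^ k : Monoid.End G)) :
    Subgroup.map (φ ^ (j - k) : Monoid.End G) K ≤ K ∧
    Finite (G ⧸ K) ∧
    ∃ e : G ⧸ K → G ⧸ K, Function.Bijective e ∧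
      ∀ g : G, e (QuotientGroup.mk g) = QuotientGroup.mk ((φ ^ (j - k) : Monoid.End G) g) := by
  set ψ := (φ ^ (j - k) : Monoid.End G) with hψ
  have hcomp : ∀ x : G, (φ ^ k : Monoid.End G) (ψ x) = (φ ^ j : Monoid.End G) x := by
    intro x
    have h : (φ ^ k : Monoid.End G) * ψ = φ ^ j := by
      rw [hψ, ← pow_add, Nat.add_sub_cancel' hkj.le]
    calc (φ ^ k : Monoid.End G) (ψ x) = ((φ ^ k : Monoid.End G) * ψ) x := rfl
      _ = (φ ^ j : Monoid.End G) x := by rw [h]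
  have hmem : ∀ x : G, ψ x ∈ K ↔ x ∈ K := by
    intro x
    rw [hK]
    exact (Iff.of_eq (congrArg (· ∈ H') (hcomp x))).trans (Iff.of_eq (congrArg (x ∈ ·) heq)).symm
  have hFI : K.FiniteIndex := by
    constructor
    rw [hK]
    erw [Subgroup.index_comap]
    exact (Subgroup.instFiniteIndex_subgroupOf H' _).index_ne_zero
  have hfin : Finite (G ⧸ K) := @Subgroup.finite_quotient_of_finiteIndex G _ K hFI
  refine ⟨?_, hfin, ?_⟩
  · rintro _ ⟨x, hx, rfl⟩
    exact (hmem x).2 hx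
  · refine ⟨Quotient.map' ψ (fun a b hab => ?_), ?_, fun g => rfl⟩
    · rw [QuotientGroup.leftRel_apply] at hab ⊢
      have : ψ (a⁻¹ * b) ∈ K := (hmem _).2 hab
      simpa using this
    rw [← Finite.injective_iff_bijective]
    intro a b
    induction a using Quotient.inductionOn'
    induction b using Quotient.inductionOn'
    intro hab
    rw [Quotient.map'_mk'', Quotient.map'_mk'', Quotient.eq''] at hab
    rw [Quotient.eq'']
    rw [QuotientGroup.leftRel_apply] at hab ⊢
    rw [← map_inv, ← map_mul] at hab
    exact (hmem _).1 hab
end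

section
/- Let F be a finitely generated free group (more generally, any group in which finitely generated subgroups are separable). If H ≤ F is a finitely generated subgroup and g ∈ F satisfies g H g^{-1} ≤ H, with g H g^{-1} a proper subgroup of H, then a contradiction arises; i.e., a finitely generated subgroup of a free group cannot be conjugate (within the ambient group) to a proper subgroup of itself: if g H g^{-1} ≤ H then g H g^{-1} = H. -/
open IsFreeGroup Subgroup

section Aux

variable {G : Type*} [Group G] [IsFreeGroup G]

/-- Every element of a free group is a product of generators and inverses of generators. -/
lemma stmt3_word_exists (g : G) : ∃ l : List G,
    (∀ z ∈ l, (∃ s : Generators G, z = of s) ∨ (∃ s : Generators G, z = (of s)⁻¹)) ∧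
    l.prod = g := by
  have h1 : Subgroup.closure (Set.range (of : Generators G → G)) = ⊤ := by
    have : Set.range (of : Generators G → G) =
        (IsFreeGroup.mulEquiv G).toMonoidHom ''
          (Set.range (FreeGroup.of : Generators G → FreeGroup (Generators G))) := by
      rw [← Set.range_comp]
      rfl
    rw [this, ← MonoidHom.map_closure, FreeGroup.closure_range_of,
      ← MonoidHom.range_eq_map, MonoidHom.range_eq_top]
    exact (IsFreeGroup.mulEquiv G).surjective
  set S : Set G := Set.range (of : Generators G → G)
  have h2 : g ∈ Submonoid.closure (S ∪ S⁻¹) := by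
    have hts : (⊤ : Subgroup G).toSubmonoid = Submonoid.closure (S ∪ S⁻¹) := by
      rw [← h1, Subgroup.closure_toSubmonoid]
    rw [← hts]
    trivial
  obtain ⟨l, hl, rfl⟩ := Submonoid.exists_list_of_mem_closure h2
  refine ⟨l, fun z hz => ?_, rfl⟩
  rcases hl z hz with h | h
  · obtain ⟨s, hs⟩ := h
    exact Or.inl ⟨s, hs.symm⟩
  · obtain ⟨s, hs⟩ := Set.mem_inv.mp h
    exact Or.inr ⟨s, by rw [hs, inv_inv]⟩

/-- Extension of a partial injection on a finite type to a permutation. -/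
lemma stmt3_extend_partial {α : Type*} [Finite α] (p : α → Prop) (f : ∀ a, p a → α)
    (hinj : ∀ a ha b hb, f a ha = f b hb → a = b) :
    ∃ π : Equiv.Perm α, ∀ a (ha : p a), π a = f a ha := by
  classical
  cases nonempty_fintype α
  set F : {x // p x} → α := fun x => f x.1 x.2 with hF
  have hFinj : Function.Injective F := fun a b hab => Subtype.ext (hinj _ _ _ _ hab)
  set q : α → Prop := fun a => a ∈ Set.range F with hq
  let e : {x // p x} ≃ {x // q x} := Equiv.ofInjective F hFinj
  have hcard : Fintype.card {x // ¬p x} = Fintype.card {x // ¬q x} := by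
    have h1 := Fintype.card_congr e
    have h2 : Fintype.card {x // ¬p x} = Fintype.card α - Fintype.card {x // p x} :=
      Fintype.card_subtype_compl _
    have h3 : Fintype.card {x // ¬q x} = Fintype.card α - Fintype.card {x // q x} :=
      Fintype.card_subtype_compl _
    rw [h2, h3, h1]
  let e' : {x // ¬p x} ≃ {x // ¬q x} := Fintype.equivOfCardEq hcard
  refine ⟨Equiv.subtypeCongr e e', fun a ha => ?_⟩
  have : Equiv.subtypeCongr e e' a = ↑(e ⟨a, ha⟩) := by
    simp only [Equiv.subtypeCongr, Equiv.trans_apply,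
      Equiv.sumCompl_symm_apply_of_pos ha, Equiv.sumCongr_apply, Sum.map_inl,
      Equiv.sumCompl_apply_inl]
  rw [this]
  exact congrArg Subtype.val (Equiv.ofInjective_apply F hFinj ⟨a, ha⟩)

/-- LERF (Hall's theorem) for free groups: a finitely generated subgroup is separable. -/
lemma stmt3_lerf (H : Subgroup G) (hH : H.FG) (y : G) (hy : y ∉ H) :
    ∃ K : Subgroup G, K.FiniteIndex ∧ H ≤ K ∧ y ∉ K := by
  classical
  obtain ⟨T, hT⟩ := hH
  choose w hw hwprod using (stmt3_word_exists (G := G))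
  let base : G ⧸ H := QuotientGroup.mk 1
  let Ls : List (List G) := w y :: T.toList.map w
  let V : Finset (G ⧸ H) :=
    (Ls.map fun L => L.tails.map fun L' => (L'.prod : G) • base).flatten.toFinset
  have memV : ∀ L ∈ Ls, ∀ L' ∈ L.tails, (L'.prod : G) • base ∈ V := by
    intro L hL L' hL'
    simp only [V, List.mem_toFinset, List.mem_flatten]
    exact ⟨L.tails.map fun L' => (L'.prod : G) • base,
      List.mem_map_of_mem hL, List.mem_map_of_mem hL'⟩
  have hbase : base ∈ V := by
    have h0 := memV (w y) List.mem_cons_self [] (by simp [List.mem_tails])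
    simpa using h0
  -- for each generator, a permutation of V extending the coset translation
  have key : ∀ s : Generators G, ∃ π : Equiv.Perm {x // x ∈ V},
      ∀ (v : {x // x ∈ V}) (hv : of s • (v : G ⧸ H) ∈ V), π v = ⟨of s • ↑v, hv⟩ := by
    intro s
    refine stmt3_extend_partial (α := {x // x ∈ V})
      (fun v => of s • (v : G ⧸ H) ∈ V)
      (fun v hv => ⟨of s • ↑v, hv⟩) ?_
    intro a ha b hb hab
    have : of s • (a : G ⧸ H) = of s • (b : G ⧸ H) := congrArg Subtype.val hab
    exact Subtype.ext (MulAction.injective (of s) this)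
  choose π hπ using key
  let φ : G →* Equiv.Perm {x // x ∈ V} := IsFreeGroup.lift π
  -- reading lemma
  have read : ∀ L : List G,
      (∀ z ∈ L, (∃ s : Generators G, z = of s) ∨ (∃ s : Generators G, z = (of s)⁻¹)) →
      (∀ L' ∈ L.tails, (L'.prod : G) • base ∈ V) →
      ∀ (hm : (L.prod : G) • base ∈ V),
      φ L.prod ⟨base, hbase⟩ = ⟨L.prod • base, hm⟩ := by
    intro L
    induction L with
    | nil =>
      intro _ _ hm
      simp only [List.prod_nil, map_one, Equiv.Perm.coe_one, id_eq]
      exact Subtype.ext (by simp [one_smul])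
    | cons z L ih =>
      intro hzs htails hm
      have htails' : ∀ L' ∈ L.tails, (L'.prod : G) • base ∈ V := by
        intro L' hL'
        exact htails L' (by
          rw [List.mem_tails] at hL' ⊢
          exact hL'.trans (List.suffix_cons z L))
      have hu : (L.prod : G) • base ∈ V :=
        htails' L ((List.mem_tails _ _).mpr (List.suffix_refl L))
      have hfull : ((z :: L).prod : G) • base ∈ V :=
        htails (z :: L) ((List.mem_tails _ _).mpr (List.suffix_refl _))
      have ihe := ih (fun a ha => hzs a (List.mem_cons_of_mem z ha)) htails' hu
      have hprod : (z :: L).prod = z * L.prod := List.prod_cons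
      apply Subtype.ext
      show (φ (z :: L).prod ⟨base, hbase⟩ : G ⧸ H) = (z :: L).prod • base
      rw [hprod, map_mul, Equiv.Perm.mul_apply, ihe]
      rcases hzs z List.mem_cons_self with ⟨s, rfl⟩ | ⟨s, rfl⟩
      · have hφ : φ (of s) = π s := IsFreeGroup.lift_of _ _
        have hv : of s • ((L.prod : G) • base) ∈ V := by
          rw [smul_smul, ← hprod]
          exact hm
        rw [hφ, hπ s ⟨L.prod • base, hu⟩ hv]
        show of s • ((L.prod : G) • base) = _
        rw [smul_smul]
      · have hφ : φ ((of s)⁻¹) = (π s)⁻¹ := by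
          rw [map_inv, IsFreeGroup.lift_of]
        have htar : ((of s)⁻¹ * L.prod : G) • base ∈ V := by
          rw [← hprod]
          exact hm
        have hback : of s • (((of s)⁻¹ * L.prod : G) • base) ∈ V := by
          rw [smul_smul, ← mul_assoc, mul_inv_cancel, one_mul]
          exact hu
        have hstep := hπ s ⟨((of s)⁻¹ * L.prod : G) • base, htar⟩ hback
        have hstep' : π s ⟨((of s)⁻¹ * L.prod : G) • base, htar⟩ = ⟨L.prod • base, hu⟩ := by
          rw [hstep]
          exact Subtype.ext (by
            show of s • (((of s)⁻¹ * L.prod : G) • base) = (L.prod : G) • base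
            rw [smul_smul, ← mul_assoc, mul_inv_cancel, one_mul])
        have hinvstep : (π s)⁻¹ ⟨(L.prod : G) • base, hu⟩
            = ⟨((of s)⁻¹ * L.prod : G) • base, htar⟩ := by
          rw [Equiv.Perm.inv_def, Equiv.symm_apply_eq, hstep']
        rw [hφ, hinvstep]
  -- the finite-index subgroup
  letI act : MulAction G {x // x ∈ V} := MulAction.compHom _ φ
  let K := MulAction.stabilizer G (⟨base, hbase⟩ : {x // x ∈ V})
  have hsmul : ∀ (a : G) (v : {x // x ∈ V}), a • v = φ a v := fun _ _ => rfl
  have hfin : Finite (G ⧸ K) :=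
    Finite.of_equiv _ (MulAction.orbitEquivQuotientStabilizer G (⟨base, hbase⟩ : {x // x ∈ V}))
  refine ⟨K, @Subgroup.finiteIndex_of_finite_quotient _ _ K hfin, ?_, ?_⟩
  · rw [← hT, Subgroup.closure_le]
    intro t ht
    have htH : t ∈ H := hT ▸ Subgroup.subset_closure ht
    have htT : t ∈ T := ht
    have hmem : w t ∈ Ls :=
      List.mem_cons_of_mem _ (List.mem_map_of_mem (Finset.mem_toList.mpr htT))
    have hmemt : ((w t).prod : G) • base ∈ V :=
      memV (w t) hmem (w t) ((List.mem_tails _ _).mpr (List.suffix_refl _))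
    have hread := read (w t) (hw t) (memV (w t) hmem) hmemt
    have htb : ((w t).prod : G) • base = base := by
      rw [hwprod t]
      show t • (QuotientGroup.mk (1 : G) : G ⧸ H) = QuotientGroup.mk (1 : G)
      rw [MulAction.Quotient.smul_mk]
      exact QuotientGroup.eq.mpr (by simpa using inv_mem htH)
    show t ∈ MulAction.stabilizer G (⟨base, hbase⟩ : {x // x ∈ V})
    rw [MulAction.mem_stabilizer_iff, hsmul, ← hwprod t, hread]
    exact Subtype.ext htb
  · intro hyK
    rw [MulAction.mem_stabilizer_iff, hsmul] at hyK
    have hmem : w y ∈ Ls := List.mem_cons_self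
    have hmemy : ((w y).prod : G) • base ∈ V :=
      memV (w y) hmem (w y) ((List.mem_tails _ _).mpr (List.suffix_refl _))
    have hread := read (w y) (hw y) (memV (w y) hmem) hmemy
    rw [← hwprod y, hread] at hyK
    have hval : ((w y).prod : G) • base = base := congrArg Subtype.val hyK
    rw [hwprod y] at hval
    have hyb : (y : G) • base = QuotientGroup.mk y := by
      show y • (QuotientGroup.mk (1 : G) : G ⧸ H) = _
      rw [MulAction.Quotient.smul_mk, smul_eq_mul, mul_one]
    rw [hyb] at hval
    exact hy (by simpa using (QuotientGroup.eq.mp hval))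

end Aux

/-- A finitely generated subgroup of a finitely generated free group cannot be conjugate
(within the ambient group) to a proper subgroup of itself: if `g H g⁻¹ ≤ H` then
`g H g⁻¹ = H`. -/
theorem stmt_3 {G : Type*} [Group G] [IsFreeGroup G] [Group.FG G]
    (H : Subgroup G) (hH : H.FG) (g : G)
    (h : Subgroup.map (MulAut.conj g).toMonoidHom H ≤ H) :
    Subgroup.map (MulAut.conj g).toMonoidHom H = H := by
  by_contra hne
  have hlt : Subgroup.map (MulAut.conj g).toMonoidHom H < H := lt_of_le_of_ne h hne
  obtain ⟨x, hxH, hxM⟩ := SetLike.exists_of_lt hlt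
  set y : G := g⁻¹ * x * g with hy_def
  have hyH : y ∉ H := by
    intro hy
    exact hxM ⟨y, hy, by simp [hy_def, MulAut.conj_apply, mul_assoc]⟩
  obtain ⟨K, hKfi, hHK, hyK⟩ := stmt3_lerf H hH y hyH
  set N : Subgroup G := K.normalCore with hN
  haveI : N.FiniteIndex := Subgroup.finiteIndex_normalCore K
  set M : Subgroup G := N ⊔ H with hM
  haveI : M.FiniteIndex := Subgroup.finiteIndex_of_le (le_sup_left : N ≤ M)
  have hMK : M ≤ K := sup_le K.normalCore_le hHK
  have hmapN : Subgroup.map (MulAut.conj g).toMonoidHom N = N := by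
    haveI : N.Normal := K.normalCore_normal
    ext z
    simp only [Subgroup.mem_map, MulAut.conj_apply, MulEquiv.coe_toMonoidHom]
    constructor
    · rintro ⟨n, hn, rfl⟩
      exact this.conj_mem n hn g
    · intro hz
      exact ⟨g⁻¹ * z * g, by simpa using this.conj_mem z hz g⁻¹, by group⟩
  have hconjM : Subgroup.map (MulAut.conj g).toMonoidHom M ≤ M := by
    rw [hM, Subgroup.map_sup]
    exact sup_le (hmapN.le.trans le_sup_left) (h.trans le_sup_right)
  have hidx : (Subgroup.map (MulAut.conj g).toMonoidHom M).index = M.index :=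
    Subgroup.index_map_eq M (MulAut.conj g).surjective
      (by
        rw [(MonoidHom.ker_eq_bot_iff _).mpr]
        · exact bot_le
        · exact (MulAut.conj g).injective)
  have hMeq : Subgroup.map (MulAut.conj g).toMonoidHom M = M := by
    by_contra hne2
    haveI : (Subgroup.map (MulAut.conj g).toMonoidHom M).FiniteIndex :=
      ⟨by rw [hidx]; exact Subgroup.FiniteIndex.index_ne_zero⟩
    have := Subgroup.index_strictAnti (lt_of_le_of_ne hconjM hne2)
    omega
  have hxM' : x ∈ Subgroup.map (MulAut.conj g).toMonoidHom M := by
    rw [hMeq]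
    exact (le_sup_right : H ≤ M) hxH
  obtain ⟨m, hm, hmx⟩ := hxM'
  have hym : y = m := by
    simp only [MulAut.conj_apply, MulEquiv.coe_toMonoidHom] at hmx
    rw [hy_def, ← hmx]
    group
  exact hyK (hMK (hym ▸ hm))
end

section
/- Let F be a finitely generated free group and φ : F → F an injective nonsurjective endomorphism. Then there is no g ∈ F and i < j with g φ^i(F) g^{-1} = φ^j(F); i.e., no image subgroup φ^i(F) is conjugate in F to a later image φ^j(F). -/
open Subgroup

/-- Evaluating a lift on a basis element. -/
lemma freeGroupBasis_lift_self {ι G H : Type*} [Group G] [Group H]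
    (b : FreeGroupBasis ι G) (f : ι → H) (i : ι) : b.lift f (b i) = f i := by
  have : b.lift f (b i) = (FreeGroup.lift f) (b.repr (b i)) := rfl
  rw [this, b.repr_apply_coe, FreeGroup.lift_apply_of]

/-- A free group of rank `r+1` cannot arise inside the chain situation:
if `S` is a strictly increasing chain of subgroups of a free group, each generated
by at most `r` elements, we get a contradiction. -/
lemma no_strict_chain {G : Type u} [Group G] [IsFreeGroup G] (r : ℕ)
    (S : ℕ → Subgroup G)
    (hlt : ∀ n, S n < S (n + 1))
    (hgen : ∀ n, ∃ T : Finset G, T.card ≤ r ∧ S n = Subgroup.closure (T : Set G)) :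
    False := by
  classical
  have hmono : Monotone S := monotone_nat_of_le_succ fun n => (hlt n).le
  have hdir : Directed (· ≤ ·) S := hmono.directed_le
  set U : Subgroup G := ⨆ n, S n with hU
  have hSU : ∀ n, S n ≤ U := fun n => le_iSup S n
  have hmemU : ∀ x : G, x ∈ U → ∃ n, x ∈ S n := by
    intro x hx
    exact (Subgroup.mem_iSup_of_directed hdir).1 hx
  -- U is a free group
  haveI : IsFreeGroup U := inferInstance
  set ι := IsFreeGroup.Generators U with hι
  set b : FreeGroupBasis ι U := IsFreeGroup.basis U with hb
  -- the basis generates U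
  have hgenU : Subgroup.closure (Set.range ⇑b) = (⊤ : Subgroup U) := by
    have h1 : Subgroup.map b.repr.symm.toMonoidHom
        (Subgroup.closure (Set.range (FreeGroup.of : ι → FreeGroup ι))) =
        Subgroup.closure (Set.range ⇑b) := by
      rw [MonoidHom.map_closure]
      congr 1
      rw [← Set.range_comp]
      rfl
    have h2 : Subgroup.map b.repr.symm.toMonoidHom ⊤ = ⊤ := by
      rw [← MonoidHom.range_eq_map, MonoidHom.range_eq_top]
      exact b.repr.symm.surjective
    rw [← FreeGroup.closure_range_of ι] at h2
    rw [h1] at h2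
    exact h2
  rcases finite_or_infinite ι with hfin | hinf
  · -- finite case: U is finitely generated, hence contained in some S N
    have hfgU : Group.FG U := Group.fg_iff.2 ⟨Set.range ⇑b, hgenU, Set.finite_range _⟩
    obtain ⟨T, hT⟩ := ((Group.fg_iff_subgroup_fg U).1 hfgU)
    -- find N with all generators in S N
    have hTU : ∀ t ∈ T, t ∈ U := fun t ht => hT ▸ Subgroup.subset_closure ht
    choose f hf using fun (t : T) => hmemU (t : G) (hTU t t.2)
    obtain ⟨N, hN⟩ : ∃ N, ∀ t ∈ T, t ∈ S N := by
      refine ⟨T.attach.sup f, fun t ht => hmono (Finset.le_sup (Finset.mem_attach _ ⟨t, ht⟩)) (hf ⟨t, ht⟩)⟩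
    have hUle : U ≤ S N := by
      rw [← hT]
      exact (Subgroup.closure_le _).2 hN
    exact absurd (lt_of_lt_of_le (hlt N) (le_trans (hSU (N + 1)) hUle)) (lt_irrefl _)
  · -- infinite case: pick r+1 basis elements, all lie in some S N
    set emb : Fin (r + 1) ↪ ι := (Fin.valEmbedding).trans (Infinite.natEmbedding ι) with hemb
    set x : Fin (r + 1) → U := fun k => b (emb k) with hx
    choose f hf using fun (k : Fin (r + 1)) => hmemU (x k) (x k).2
    obtain ⟨N, hN⟩ : ∃ N, ∀ k, ((x k : G)) ∈ S N :=
      ⟨Finset.univ.sup f, fun k => hmono (Finset.le_sup (Finset.mem_univ k)) (hf k)⟩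
    obtain ⟨T, hTcard, hSN⟩ := hgen N
    have hTU : ∀ t ∈ T, t ∈ U := fun t ht =>
      hSU N (hSN ▸ Subgroup.subset_closure ht)
    -- a retraction to ℚ^{r+1}
    set ρ : U →* Multiplicative (Fin (r + 1) → ℚ) :=
      b.lift (fun i => Multiplicative.ofAdd
        (Function.extend emb (fun k => Pi.single k (1 : ℚ)) 0 i)) with hρ
    have hρx : ∀ k, ρ (x k) = Multiplicative.ofAdd (Pi.single k (1 : ℚ)) := by
      intro k
      rw [hx]
      rw [freeGroupBasis_lift_self]
      congr 1
      exact emb.injective.extend_apply _ _ k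
    -- the span of the images of the generators
    set Y : Finset (Fin (r + 1) → ℚ) := T.attach.image
      (fun t : {y // y ∈ T} => Multiplicative.toAdd (ρ ⟨t.1, hTU t.1 t.2⟩)) with hY
    set W : Submodule ℚ (Fin (r + 1) → ℚ) := Submodule.span ℚ (Y : Set (Fin (r + 1) → ℚ)) with hW
    have key : ∀ u : G, ∀ hu : u ∈ S N, ∀ huU : u ∈ U,
        Multiplicative.toAdd (ρ ⟨u, huU⟩) ∈ W := by
      intro u hu
      rw [hSN] at hu
      induction hu using Subgroup.closure_induction with
      | mem t ht =>
        intro huU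
        apply Submodule.subset_span
        have : Multiplicative.toAdd (ρ ⟨t, huU⟩) ∈ Y := by
          rw [hY]
          apply Finset.mem_image.2
          exact ⟨⟨t, ht⟩, Finset.mem_attach _ _, rfl⟩
        exact this
      | one =>
        intro h1
        have : (⟨(1 : G), h1⟩ : U) = 1 := rfl
        rw [this, map_one]
        exact Submodule.zero_mem W
      | mul a c ha hc iha ihc =>
        intro h
        have haU : a ∈ U := hSU N (hSN ▸ ha)
        have hcU : c ∈ U := hSU N (hSN ▸ hc)
        have : (⟨a * c, h⟩ : U) = ⟨a, haU⟩ * ⟨c, hcU⟩ := rfl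
        rw [this, map_mul]
        exact Submodule.add_mem W (iha haU) (ihc hcU)
      | inv a ha iha =>
        intro h
        have haU : a ∈ U := hSU N (hSN ▸ ha)
        have : (⟨a⁻¹, h⟩ : U) = (⟨a, haU⟩)⁻¹ := rfl
        rw [this, map_inv]
        exact Submodule.neg_mem W (iha haU)
    have hsingle : ∀ k : Fin (r + 1), Pi.single k (1 : ℚ) ∈ W := by
      intro k
      have h2 := key (x k : G) (hN k) (x k).2
      have h3 : (⟨(x k : G), (x k).2⟩ : U) = x k := rfl
      rw [h3, hρx k] at h2
      exact h2
    have hWtop : W = ⊤ := by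
      rw [eq_top_iff, ← (Pi.basisFun ℚ (Fin (r + 1))).span_eq, Submodule.span_le]
      rintro v ⟨k, rfl⟩
      rw [Pi.basisFun_apply]
      exact hsingle k
    have hle : Module.finrank ℚ (Fin (r + 1) → ℚ) ≤ Y.card := by
      have h := finrank_span_finset_le_card (R := ℚ) Y
      calc Module.finrank ℚ (Fin (r + 1) → ℚ)
          = Module.finrank ℚ (⊤ : Submodule ℚ (Fin (r + 1) → ℚ)) := (finrank_top ℚ _).symm
        _ = Module.finrank ℚ W := by rw [hWtop]
        _ = Set.finrank ℚ (Y : Set (Fin (r + 1) → ℚ)) := rfl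
        _ ≤ Y.card := h
    have hrank : Module.finrank ℚ (Fin (r + 1) → ℚ) = r + 1 := by
      rw [Module.finrank_pi, Fintype.card_fin]
    have hYcard : Y.card ≤ r := le_trans (Finset.card_image_le) (by simpa using hTcard)
    omega

/-- For an injective nonsurjective endomorphism of a finitely generated free group,
no image `φ^i(F)` is conjugate in `F` to a later image `φ^j(F)`. -/
theorem stmt_5 {G : Type*} [Group G] [IsFreeGroup G] [Group.FG G]
    (φ : Monoid.End G) (hinj : Function.Injective φ) (hsurj : ¬ Function.Surjective φ) :
    ¬ ∃ (g : G) (i j : ℕ), i < j ∧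
      Subgroup.map (MulAut.conj g).toMonoidHom (Subgroup.map (φ ^ i : Monoid.End G) ⊤) =
        Subgroup.map (φ ^ j : Monoid.End G) ⊤ := by
  classical
  rintro ⟨g, i, j, hij, hconj⟩
  obtain ⟨k, rfl⟩ : ∃ k, j = i + (k + 1) := by
    refine ⟨j - i - 1, by omega⟩
  -- injectivity of powers
  have hpowinj : ∀ n : ℕ, Function.Injective ⇑(φ ^ n : Monoid.End G) := by
    intro n
    rw [Monoid.End.coe_pow]
    exact Function.Injective.iterate hinj n
  -- decompose the power
  have hcompmul : ∀ a b : ℕ, ((φ ^ (a + b) : Monoid.End G) : G →* G) =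
      ((φ ^ a : Monoid.End G) : G →* G).comp ((φ ^ b : Monoid.End G) : G →* G) := by
    intro a b
    rw [pow_add]
    rfl
  set H : Subgroup G := Subgroup.map (φ ^ i : Monoid.End G) ⊤ with hH
  set K : Subgroup G := Subgroup.map (φ ^ (i + (k + 1)) : Monoid.End G) ⊤ with hK
  -- K ≤ H
  have hKH : K ≤ H := by
    rw [hK, hcompmul i (k + 1), ← Subgroup.map_map (g := φ ^ i) (f := φ ^ (k + 1))]
    exact Subgroup.map_mono le_top
  -- K ≠ H
  have hKne : K ≠ H := by
    intro heq
    have h1 : Subgroup.map ((φ ^ i : Monoid.End G) : G →* G)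
        (Subgroup.map ((φ ^ (k + 1) : Monoid.End G) : G →* G) ⊤) =
        Subgroup.map ((φ ^ i : Monoid.End G) : G →* G) ⊤ := by
      rw [Subgroup.map_map (g := φ ^ i) (f := φ ^ (k + 1)), ← hcompmul i (k + 1), ← hK, heq, hH]
    have h2 : Subgroup.map ((φ ^ (k + 1) : Monoid.End G) : G →* G) ⊤ = ⊤ :=
      Subgroup.map_injective (hpowinj i) h1
    have h3 : Function.Surjective ⇑(φ ^ (k + 1) : Monoid.End G) := by
      refine (MonoidHom.range_eq_top (f := φ ^ (k + 1))).mp ?_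
      rw [MonoidHom.range_eq_map (f := φ ^ (k + 1))]
      exact h2
    apply hsurj
    rw [pow_succ', Monoid.End.coe_mul] at h3
    exact h3.of_comp
  have hKlt : K < H := lt_of_le_of_ne hKH hKne
  -- the conjugating automorphism
  set d : MulAut G := (MulAut.conj g)⁻¹ with hd
  -- map d K = H
  have hdK : Subgroup.map d.toMonoidHom K = H := by
    rw [← hconj, Subgroup.map_map]
    have : (d.toMonoidHom).comp (MulAut.conj g).toMonoidHom = MonoidHom.id G := by
      ext x
      simp [hd, mul_assoc]
    rw [this]
    exact Subgroup.map_id H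
  -- strict monotonicity of map under equivalences
  have hmaplt : ∀ (e : MulAut G) (A B : Subgroup G), A < B →
      Subgroup.map e.toMonoidHom A < Subgroup.map e.toMonoidHom B := by
    intro e A B hAB
    refine lt_of_le_of_ne (Subgroup.map_mono hAB.le) ?_
    intro heq
    exact hAB.ne (Subgroup.map_injective (e : G ≃* G).injective heq)
  -- H < map d H
  have hHlt : H < Subgroup.map d.toMonoidHom H := by
    have := hmaplt d K H hKlt
    rwa [hdK] at this
  -- the chain
  set S : ℕ → Subgroup G := fun n => Subgroup.map ((d ^ n : MulAut G)).toMonoidHom H with hS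
  have hcomp : ∀ n, Subgroup.map ((d ^ (n + 1) : MulAut G)).toMonoidHom H =
      Subgroup.map ((d ^ n : MulAut G)).toMonoidHom (Subgroup.map d.toMonoidHom H) := by
    intro n
    have hpow : ((d ^ (n + 1) : MulAut G)).toMonoidHom =
        ((d ^ n : MulAut G)).toMonoidHom.comp d.toMonoidHom := by
      ext x
      simp [pow_succ, MulAut.mul_apply]
    rw [hpow, ← Subgroup.map_map]
  have hlt : ∀ n, S n < S (n + 1) := by
    intro n
    rw [hS]
    simp only
    rw [hcomp n]
    exact hmaplt (d ^ n) H (Subgroup.map d.toMonoidHom H) hHlt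
  -- bounded generation
  obtain ⟨Tg, hTg⟩ : (⊤ : Subgroup G).FG := Group.FG.out
  have hgen : ∀ n, ∃ T : Finset G, T.card ≤ Tg.card ∧
      S n = Subgroup.closure (T : Set G) := by
    intro n
    classical
    refine ⟨(Tg.image ⇑(φ ^ i : Monoid.End G)).image ⇑((d ^ n : MulAut G)).toMonoidHom,
      le_trans Finset.card_image_le Finset.card_image_le, ?_⟩
    rw [hS]
    simp only
    rw [hH, ← hTg, MonoidHom.map_closure (f := φ ^ i), MonoidHom.map_closure]
    congr 1
    rw [Finset.coe_image, Finset.coe_image]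
    rfl
  exact no_strict_chain Tg.card S hlt hgen
end

section
/- Let A be a nonnegative square integer matrix that is irreducible but not primitive. Then A is permutation-similar to a transitive block permutation matrix with d ≥ 2 blocks; equivalently, the index set {1,…,n} admits a partition into d ≥ 2 nonempty classes C₀,…,C_{d-1} such that A_{ij} ≠ 0 implies that j ∈ C_m forces i ∈ C_{m+1 mod d}. -/
private lemma pow_pos_step {n : ℕ} (A : Matrix (Fin n) (Fin n) ℕ) {a b : ℕ} {i l j : Fin n}
    (h1 : 0 < (A ^ a) i l) (h2 : 0 < (A ^ b) l j) : 0 < (A ^ (a + b)) i j := by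
  rw [pow_add, Matrix.mul_apply]
  calc 0 < (A ^ a) i l * (A ^ b) l j := Nat.mul_pos h1 h2
    _ ≤ _ := Finset.single_le_sum (f := fun x => (A ^ a) i x * (A ^ b) x j)
        (fun _ _ => Nat.zero_le _) (Finset.mem_univ l)

private lemma pow_pos_decomp {n : ℕ} (A : Matrix (Fin n) (Fin n) ℕ) {a b : ℕ} {i j : Fin n}
    (h : 0 < (A ^ (a + b)) i j) : ∃ l, 0 < (A ^ a) i l ∧ 0 < (A ^ b) l j := by
  rw [pow_add, Matrix.mul_apply] at h
  obtain ⟨l, -, hl⟩ := Finset.exists_ne_zero_of_sum_ne_zero h.ne'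
  rw [mul_ne_zero_iff] at hl
  exact ⟨l, Nat.pos_of_ne_zero hl.1, Nat.pos_of_ne_zero hl.2⟩

/-- An irreducible nonnegative matrix that is not primitive has the cyclic block structure:
the index set is partitioned into `d ≥ 2` nonempty classes, cyclically permuted in the sense
that a nonzero entry `A i j` with `j` in class `m` forces `i` into class `m + 1 (mod d)`. -/
theorem stmt_10 {n : ℕ} (A : Matrix (Fin n) (Fin n) ℕ)
    (hirr : ∀ i j : Fin n, ∃ k : ℕ, 1 ≤ k ∧ 0 < (A ^ k) i j)
    (hprim : ¬ ∃ k : ℕ, 1 ≤ k ∧ ∀ i j : Fin n, 0 < (A ^ k) i j) :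
    ∃ d : ℕ, 2 ≤ d ∧ ∃ c : Fin n → ZMod d, Function.Surjective c ∧
      ∀ i j : Fin n, A i j ≠ 0 → c i = c j + 1 := by
  classical
  have hn : 0 < n := by
    rcases Nat.eq_zero_or_pos n with h | h
    · exfalso; apply hprim; subst h; exact ⟨1, le_refl 1, fun i => i.elim0⟩
    · exact h
  set z : Fin n := ⟨0, hn⟩ with hz
  set S : Set ℕ := {k | 1 ≤ k ∧ 0 < (A ^ k) z z} with hS
  have hSadd : ∀ a ∈ S, ∀ b ∈ S, a + b ∈ S := by
    rintro a ⟨ha1, ha2⟩ b ⟨hb1, hb2⟩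
    exact ⟨by omega, pow_pos_step A ha2 hb2⟩
  have hSmul : ∀ m a, 1 ≤ m → a ∈ S → m * a ∈ S := by
    intro m
    induction m with
    | zero => omega
    | succ p ih =>
      intro a _ haS
      rcases Nat.eq_zero_or_pos p with rfl | hp
      · simpa using haS
      · have := hSadd _ (ih a hp haS) _ haS
        have he : p * a + a = (p + 1) * a := by ring
        rwa [he] at this
  obtain ⟨s0, hs01, hs02⟩ := hirr z z
  have hs0S : s0 ∈ S := ⟨hs01, hs02⟩
  obtain ⟨g, hg⟩ := Int.subgroup_cyclic (AddSubgroup.closure ((Nat.cast : ℕ → ℤ) '' S))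
  set d := g.natAbs with hdd
  have hdvd : ∀ s ∈ S, d ∣ s := by
    intro s hs
    have hmem : (s : ℤ) ∈ AddSubgroup.closure ((Nat.cast : ℕ → ℤ) '' S) :=
      AddSubgroup.subset_closure ⟨s, hs, rfl⟩
    rw [hg, AddSubgroup.mem_closure_singleton] at hmem
    obtain ⟨m, hm⟩ := hmem
    have hdvd' : g ∣ (s : ℤ) := ⟨m, by rw [← hm, smul_eq_mul, mul_comm]⟩
    have := Int.natAbs_dvd_natAbs.mpr hdvd'
    simpa using this
  have hdmem : (d : ℤ) ∈ AddSubgroup.closure ((Nat.cast : ℕ → ℤ) '' S) := by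
    rw [hg, AddSubgroup.mem_closure_singleton]
    rcases Int.natAbs_eq g with h | h
    · exact ⟨1, by rw [one_smul]; omega⟩
    · exact ⟨-1, by rw [neg_one_zsmul]; omega⟩
  -- decompose d as a difference of two sums of elements of S
  have hdecomp : ∃ x y : ℕ, (x = 0 ∨ x ∈ S) ∧ (y = 0 ∨ y ∈ S) ∧ (d : ℤ) = (x : ℤ) - y := by
    have key : ∀ w ∈ AddSubgroup.closure ((Nat.cast : ℕ → ℤ) '' S),
        ∃ x y : ℕ, (x = 0 ∨ x ∈ S) ∧ (y = 0 ∨ y ∈ S) ∧ w = (x : ℤ) - y := by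
      intro w hw
      have hcomb : ∀ x1 x2 : ℕ, (x1 = 0 ∨ x1 ∈ S) → (x2 = 0 ∨ x2 ∈ S) →
          (x1 + x2 = 0 ∨ x1 + x2 ∈ S) := by
        rintro x1 x2 (rfl | h1) (rfl | h2)
        · left; rfl
        · right; simpa using h2
        · right; simpa using h1
        · right; exact hSadd _ h1 _ h2
      induction hw using AddSubgroup.closure_induction with
      | mem w hw =>
        obtain ⟨s, hs, rfl⟩ := hw
        exact ⟨s, 0, Or.inr hs, Or.inl rfl, by simp⟩
      | zero => exact ⟨0, 0, Or.inl rfl, Or.inl rfl, by simp⟩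
      | add a b ha hb iha ihb =>
        obtain ⟨x1, y1, hx1, hy1, he1⟩ := iha
        obtain ⟨x2, y2, hx2, hy2, he2⟩ := ihb
        exact ⟨x1 + x2, y1 + y2, hcomb _ _ hx1 hx2, hcomb _ _ hy1 hy2,
          by push_cast; rw [he1, he2]; ring⟩
      | neg a ha iha =>
        obtain ⟨x1, y1, hx1, hy1, he1⟩ := iha
        exact ⟨y1, x1, hy1, hx1, by rw [he1]; ring⟩
    exact key _ hdmem
  obtain ⟨x, y, hx, hy, hxy⟩ := hdecomp
  clear_value d
  have hxyd : x = y + d := by omega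
  have hd1 : 1 ≤ d := by
    rcases Nat.eq_zero_or_pos d with h0 | h1
    · exfalso; have hh := hdvd s0 hs0S; rw [h0, zero_dvd_iff] at hh; omega
    · exact h1
  have hd2 : 2 ≤ d := by
    by_contra hcon
    have hdone : d = 1 := by omega
    -- then all large numbers are in S, hence A is primitive
    have hbig : ∃ N : ℕ, ∀ k, N ≤ k → k ∈ S := by
      have hx1 : x = y + 1 := by omega
      rcases hy with rfl | hyS
      · have hxS : x ∈ S := hx.resolve_left (by omega)
        have hx1' : x = 1 := by omega
        refine ⟨1, fun k hk => ?_⟩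
        have := hSmul k x hk hxS
        rwa [hx1', mul_one] at this
      · refine ⟨y * y, fun k hk => ?_⟩
        have hxS : x ∈ S := hx.resolve_left (by omega)
        have hy1 : 1 ≤ y := hyS.1
        have hqr : y * (k / y) + k % y = k := Nat.div_add_mod k y
        have hrly : k % y < y := Nat.mod_lt _ (by omega)
        have hqy : y ≤ k / y := Nat.le_div_iff_mul_le (by omega) |>.mpr (by nlinarith)
        set q := k / y
        set r := k % y
        obtain ⟨t, ht⟩ : ∃ t, q = t + r := ⟨q - r, by omega⟩
        have hkt : k = t * y + r * x := by rw [hx1]; nlinarith [hqr, ht]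
        have ht1 : 1 ≤ t := by omega
        rcases Nat.eq_zero_or_pos r with hr0 | hrpos
        · have hk0 : k = t * y := by rw [hkt, hr0, zero_mul, add_zero]
          rw [hk0]; exact hSmul t y ht1 hyS
        · rw [hkt]
          exact hSadd _ (hSmul t y ht1 hyS) _ (hSmul r x hrpos hxS)
    obtain ⟨N, hN⟩ := hbig
    apply hprim
    set f : Fin n × Fin n → ℕ :=
      fun p => (hirr p.1 z).choose + (hirr z p.2).choose with hf
    set M := N + 1 + Finset.univ.sup f with hM
    refine ⟨M, by omega, fun i j => ?_⟩
    obtain ⟨ha1, ha2⟩ := (hirr i z).choose_spec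
    obtain ⟨hb1, hb2⟩ := (hirr z j).choose_spec
    set a := (hirr i z).choose
    set b := (hirr z j).choose
    have hab : a + b ≤ Finset.univ.sup f := Finset.le_sup (f := f) (Finset.mem_univ (i, j))
    set k := M - a - b with hk
    have hkN : N ≤ k := by omega
    have hkS := hN k hkN
    have hMk : M = a + (k + b) := by omega
    rw [hMk]
    exact pow_pos_step A ha2 (pow_pos_step A hkS.2 hb2)
  -- now build the coloring
  haveI : NeZero d := ⟨by omega⟩
  have cong : ∀ (i : Fin n) (a b : ℕ), 0 < (A ^ a) z i → 0 < (A ^ b) z i →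
      (a : ZMod d) = (b : ZMod d) := by
    intro i a b ha hb
    obtain ⟨m, hm1, hm2⟩ := hirr i z
    have h1 : d ∣ a + m := hdvd _ ⟨by omega, pow_pos_step A ha hm2⟩
    have h2 : d ∣ b + m := hdvd _ ⟨by omega, pow_pos_step A hb hm2⟩
    have e1 : ((a + m : ℕ) : ZMod d) = 0 := (ZMod.natCast_eq_zero_iff _ _).mpr h1
    have e2 : ((b + m : ℕ) : ZMod d) = 0 := (ZMod.natCast_eq_zero_iff _ _).mpr h2
    push_cast at e1 e2
    have := e1.trans e2.symm
    exact add_right_cancel this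
  set len : Fin n → ℕ := fun i => (hirr z i).choose with hlen
  have hlenspec : ∀ i, 1 ≤ len i ∧ 0 < (A ^ (len i)) z i := fun i => (hirr z i).choose_spec
  refine ⟨d, hd2, fun i => -((len i : ℕ) : ZMod d), ?_, ?_⟩
  · -- surjectivity
    intro r
    set t := (-r).val with htdef
    have ht : ((t : ℕ) : ZMod d) = -r := by
      simp [htdef, ZMod.natCast_val, ZMod.cast_id]
    have htd : t < d := ZMod.val_lt _
    clear_value t
    have hds0 : d ≤ s0 := Nat.le_of_dvd (by omega) (hdvd s0 hs0S)
    have hsplit : t + (s0 - t) = s0 := by omega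
    obtain ⟨v, hv1, hv2⟩ := pow_pos_decomp A (a := t) (b := s0 - t) (i := z) (j := z)
      (by rw [hsplit]; exact hs02)
    refine ⟨v, ?_⟩
    have hc := cong v (len v) t (hlenspec v).2 hv1
    show -((len v : ℕ) : ZMod d) = r
    rw [hc, ht, neg_neg]
  · -- edge condition
    intro i j hA
    have hAe : 0 < (A ^ 1) i j := by
      rw [pow_one]; exact Nat.pos_of_ne_zero hA
    have hwalk : 0 < (A ^ (len i + 1)) z j := pow_pos_step A (hlenspec i).2 hAe
    have hc := cong j (len j) (len i + 1) (hlenspec j).2 hwalk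
    push_cast at hc
    show -((len i : ℕ) : ZMod d) = -((len j : ℕ) : ZMod d) + 1
    rw [hc]; ring
end

section
/- Let G = ⟨a, b, t | t^{-1} a t = aba, t^{-1} b t = bab⟩ be the ascending HNN extension of the free group F(a,b) by the endomorphism ψ(a) = aba, ψ(b) = bab. Then ψ(ab) = (ab)³, and the subgroup of G generated by ab and t is isomorphic to the Baumslag–Solitar group BS(1,3) = ⟨x, t | t^{-1} x t = x³⟩. Consequently G is not word-hyperbolic. -/
/-- Word "distance" from `g` to `h` with respect to a finite generating set `S`:
the infimum of lengths of words in `S ∪ S⁻¹` representing `g⁻¹h`. -/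
noncomputable def wordDist {G : Type*} [Group G] (S : Finset G) (g h : G) : ℝ :=
  sInf {r : ℝ | ∃ l : List G, (∀ x ∈ l, x ∈ S ∨ x⁻¹ ∈ S) ∧ l.prod = g⁻¹ * h ∧ r = l.length}

/-- A group is word-hyperbolic if some word metric on it satisfies Gromov's four-point
condition for some `δ ≥ 0`. -/
def IsWordHyperbolic (G : Type*) [Group G] : Prop :=
  ∃ (S : Finset G) (δ : ℝ), 0 ≤ δ ∧ Subgroup.closure (S : Set G) = ⊤ ∧
    ∀ x y z t : G,
      wordDist S x z + wordDist S y t ≤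
        max (wordDist S x y + wordDist S z t) (wordDist S x t + wordDist S y z) + δ

/-- Relators of `G = ⟨a, b, t | t⁻¹at = aba, t⁻¹bt = bab⟩`, with `0 ↦ a`, `1 ↦ b`, `2 ↦ t`. -/
def sapirRels : Set (FreeGroup (Fin 3)) :=
  {(FreeGroup.of 2)⁻¹ * FreeGroup.of 0 * FreeGroup.of 2 *
      (FreeGroup.of 0 * FreeGroup.of 1 * FreeGroup.of 0)⁻¹,
   (FreeGroup.of 2)⁻¹ * FreeGroup.of 1 * FreeGroup.of 2 *
      (FreeGroup.of 1 * FreeGroup.of 0 * FreeGroup.of 1)⁻¹}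

/-- The ascending HNN extension of `F(a,b)` by `ψ(a) = aba`, `ψ(b) = bab`. -/
abbrev SapirLikeGroup : Type := PresentedGroup sapirRels

/-- Relator of `BS(1,3) = ⟨x, t | t⁻¹xt = x³⟩`, with `0 ↦ x`, `1 ↦ t`. -/
def bs13Rels : Set (FreeGroup (Fin 2)) :=
  {(FreeGroup.of 1)⁻¹ * FreeGroup.of 0 * FreeGroup.of 1 * ((FreeGroup.of 0) ^ 3)⁻¹}

/-- The Baumslag–Solitar group `BS(1,3)`. -/
abbrev BS13 : Type := PresentedGroup bs13Rels

namespace Sapir15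

open Equiv

/-- the permutation `u ↦ u + 1/2` of `ℚ`. -/
def A : Equiv.Perm ℚ := Equiv.addRight (1/2 : ℚ)

/-- the permutation `u ↦ u / 3` of `ℚ`. -/
def Tp : Equiv.Perm ℚ :=
  ⟨fun u => u / 3, fun u => u * 3, fun u => by field_simp, fun u => by field_simp⟩

@[simp] lemma A_apply (u : ℚ) : A u = u + 1/2 := rfl
@[simp] lemma Tp_apply (u : ℚ) : Tp u = u / 3 := rfl
@[simp] lemma Tp_inv_apply (u : ℚ) : Tp⁻¹ u = u * 3 := rfl

def AS : SapirLikeGroup := PresentedGroup.of 0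
def BS : SapirLikeGroup := PresentedGroup.of 1
def TS : SapirLikeGroup := PresentedGroup.of 2
def XS : SapirLikeGroup := AS * BS

lemma mk_rel_eq_one {α : Type*} {rels : Set (FreeGroup α)} {r : FreeGroup α} (h : r ∈ rels) :
    PresentedGroup.mk rels r = 1 :=
  (QuotientGroup.eq_one_iff _).mpr (Subgroup.subset_normalClosure h)

lemma rel_a : TS⁻¹ * AS * TS = AS * BS * AS := by
  have h := mk_rel_eq_one (rels := sapirRels) (Set.mem_insert _ _)
  simp only [map_mul, map_inv] at h
  have : (PresentedGroup.mk sapirRels) ∘ FreeGroup.of = (PresentedGroup.of : Fin 3 → _) := rfl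
  rw [mul_inv_eq_one] at h
  exact h

lemma rel_b : TS⁻¹ * BS * TS = BS * AS * BS := by
  have h := mk_rel_eq_one (rels := sapirRels)
    (Set.mem_insert_of_mem _ (Set.mem_singleton _))
  simp only [map_mul, map_inv] at h
  rw [mul_inv_eq_one] at h
  exact h

lemma rel_X : TS⁻¹ * XS * TS = XS ^ 3 := by
  have : TS⁻¹ * XS * TS = (TS⁻¹ * AS * TS) * (TS⁻¹ * BS * TS) := by
    unfold XS; group
  rw [this, rel_a, rel_b]
  unfold XS
  rw [pow_succ, pow_succ, pow_one]
  group

lemma rel_X_zpow (k : ℤ) : TS⁻¹ * XS ^ k * TS = XS ^ (3 * k) := by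
  have h : ∀ g : SapirLikeGroup, TS⁻¹ * g * TS = (MulAut.conj TS⁻¹) g := by
    intro g; simp [MulAut.conj_apply]
  rw [h, map_zpow, MulAut.conj_apply]
  have : TS⁻¹ * XS * TS⁻¹⁻¹ = XS ^ 3 := by rw [inv_inv]; exact rel_X
  rw [this, ← zpow_natCast XS 3, ← zpow_mul]
  norm_num

lemma rel_X_pow_push (p : ℕ) (k : ℤ) :
    (TS ^ p)⁻¹ * XS ^ k * TS ^ p = XS ^ ((3:ℤ) ^ p * k) := by
  induction p generalizing k with
  | zero => simp
  | succ n ih =>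
      have : (TS ^ (n+1))⁻¹ * XS ^ k * TS ^ (n+1)
          = (TS ^ n)⁻¹ * (TS⁻¹ * XS ^ k * TS) * TS ^ n := by
        rw [pow_succ]; group
      rw [this, rel_X_zpow, ih]
      congr 1
      rw [pow_succ]; ring

/-- The map on generators for the representation into `Perm ℚ`. -/
def fS : Fin 3 → Equiv.Perm ℚ := ![A, A, Tp]

lemma hrelS : ∀ r ∈ sapirRels, FreeGroup.lift fS r = 1 := by
  intro r hr
  rcases hr with h | h <;> subst h <;>
  · simp only [map_mul, map_inv, FreeGroup.lift_apply_of]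
    rw [mul_inv_eq_one]
    ext u
    simp only [fS, Equiv.Perm.mul_apply, Matrix.cons_val_zero, Matrix.cons_val_one,
      Matrix.head_cons, Matrix.cons_val_two, Matrix.tail_cons, A_apply, Tp_apply, Tp_inv_apply]
    ring

/-- The representation `SapirLikeGroup →* Perm ℚ`. -/
def Phi : SapirLikeGroup →* Equiv.Perm ℚ := PresentedGroup.toGroup hrelS

@[simp] lemma Phi_AS : Phi AS = A := PresentedGroup.toGroup.of hrelS
@[simp] lemma Phi_BS : Phi BS = A := PresentedGroup.toGroup.of hrelS
@[simp] lemma Phi_TS : Phi TS = Tp := PresentedGroup.toGroup.of hrelS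

lemma Phi_XS : Phi XS = Equiv.addRight (1 : ℚ) := by
  unfold XS
  rw [map_mul, Phi_AS, Phi_BS]
  ext u
  simp only [Equiv.Perm.mul_apply, A_apply, Equiv.coe_addRight]
  ring

/-- additive translations as a monoid hom from `Multiplicative ℚ`. -/
def AR : Multiplicative ℚ →* Equiv.Perm ℚ where
  toFun c := Equiv.addRight c.toAdd
  map_one' := by ext u; simp
  map_mul' c d := by ext u; simp [Equiv.Perm.mul_apply]; ring

lemma addRight_zpow (k : ℤ) :
    (Equiv.addRight (1 : ℚ)) ^ k = Equiv.addRight (k : ℚ) := by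
  have h2 : (Multiplicative.ofAdd (1:ℚ)) ^ k = Multiplicative.ofAdd (k:ℚ) := by
    simp [← ofAdd_zsmul]
  calc (Equiv.addRight (1:ℚ)) ^ k = AR ((Multiplicative.ofAdd (1:ℚ)) ^ k) := by
        rw [map_zpow]; rfl
    _ = Equiv.addRight (k:ℚ) := by rw [h2]; rfl

lemma Phi_XS_zpow (k : ℤ) : Phi (XS ^ k) = Equiv.addRight (k : ℚ) := by
  rw [map_zpow, Phi_XS, addRight_zpow]

/-- The subgroup of affine maps `u ↦ 3^q * u + c` inside `Perm ℚ`. -/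
def affSG : Subgroup (Equiv.Perm ℚ) where
  carrier := {f | ∃ q : ℤ, ∃ c : ℚ, ∀ u, f u = 3 ^ q * u + c}
  one_mem' := ⟨0, 0, fun u => by simp⟩
  mul_mem' := by
    rintro f g ⟨q, c, hf⟩ ⟨q', c', hg⟩
    refine ⟨q + q', 3 ^ q * c' + c, fun u => ?_⟩
    rw [Equiv.Perm.mul_apply, hg, hf, zpow_add₀ (by norm_num : (3:ℚ) ≠ 0)]
    ring
  inv_mem' := by
    rintro f ⟨q, c, hf⟩
    refine ⟨-q, -(3 ^ (-q) * c), fun u => ?_⟩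
    have h3 : (3:ℚ) ^ q * 3 ^ (-q) = 1 := by
      rw [← zpow_add₀ (by norm_num : (3:ℚ) ≠ 0)]; simp
    apply f.injective
    rw [show f (f⁻¹ u) = u from f.apply_symm_apply u, hf]
    linear_combination (c - u) * h3
  
lemma Phi_mem_affSG (g : SapirLikeGroup) : Phi g ∈ affSG := by
  refine PresentedGroup.generated_by _ (affSG.comap Phi) ?_ g
  intro j
  fin_cases j <;> simp only [Subgroup.mem_comap]
  · rw [show (PresentedGroup.of (⟨0, by norm_num⟩ : Fin 3) : SapirLikeGroup) = AS from rfl, Phi_AS]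
    exact ⟨0, 1/2, fun u => by simp [A]⟩
  · rw [show (PresentedGroup.of (⟨1, by norm_num⟩ : Fin 3) : SapirLikeGroup) = BS from rfl, Phi_BS]
    exact ⟨0, 1/2, fun u => by simp [A]⟩
  · rw [show (PresentedGroup.of (⟨2, by norm_num⟩ : Fin 3) : SapirLikeGroup) = TS from rfl, Phi_TS]
    exact ⟨-1, 0, fun u => by rw [Tp_apply, zpow_neg_one]; ring⟩

/-! ### The Baumslag–Solitar group BS(1,3) -/

def xi : BS13 := PresentedGroup.of 0
def tau : BS13 := PresentedGroup.of 1

lemma rel_bs : tau⁻¹ * xi * tau = xi ^ 3 := by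
  have h := mk_rel_eq_one (rels := bs13Rels) (Set.mem_singleton _)
  simp only [map_mul, map_inv, map_pow] at h
  rw [mul_inv_eq_one] at h
  exact h

lemma rel_bs_zpow (k : ℤ) : tau⁻¹ * xi ^ k * tau = xi ^ (3 * k) := by
  have h : ∀ g : BS13, tau⁻¹ * g * tau = (MulAut.conj tau⁻¹) g := by
    intro g; simp [MulAut.conj_apply]
  rw [h, map_zpow, MulAut.conj_apply]
  have : tau⁻¹ * xi * tau⁻¹⁻¹ = xi ^ 3 := by rw [inv_inv]; exact rel_bs
  rw [this, ← zpow_natCast xi 3, ← zpow_mul]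
  norm_num

lemma bs_push (n : ℕ) (k : ℤ) : (tau ^ n)⁻¹ * xi ^ k * tau ^ n = xi ^ ((3:ℤ) ^ n * k) := by
  induction n generalizing k with
  | zero => simp
  | succ m ih =>
      have : (tau ^ (m+1))⁻¹ * xi ^ k * tau ^ (m+1)
          = (tau ^ m)⁻¹ * (tau⁻¹ * xi ^ k * tau) * tau ^ m := by
        rw [pow_succ]; group
      rw [this, rel_bs_zpow, ih]
      congr 1
      rw [pow_succ]; ring

lemma bs_push' (n : ℕ) (k : ℤ) : xi ^ k * tau ^ n = tau ^ n * xi ^ ((3:ℤ) ^ n * k) := by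
  have h := bs_push n k
  calc xi ^ k * tau ^ n = tau ^ n * ((tau ^ n)⁻¹ * xi ^ k * tau ^ n) := by group
    _ = tau ^ n * xi ^ ((3:ℤ) ^ n * k) := by rw [h]

lemma bs_push'' (n : ℕ) (k : ℤ) : (tau ^ n)⁻¹ * xi ^ k = xi ^ ((3:ℤ) ^ n * k) * (tau ^ n)⁻¹ := by
  have h := bs_push n k
  calc (tau ^ n)⁻¹ * xi ^ k = ((tau ^ n)⁻¹ * xi ^ k * tau ^ n) * (tau ^ n)⁻¹ := by group
    _ = xi ^ ((3:ℤ) ^ n * k) * (tau ^ n)⁻¹ := by rw [h]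

/-- Normal form in BS(1,3): every element is `τ^a ξ^k τ^{-b}`. -/
lemma bs_normal_form (g : BS13) :
    ∃ (a b : ℕ) (k : ℤ), g = tau ^ a * xi ^ k * (tau ^ b)⁻¹ := by
  refine PresentedGroup.induction_on
    (C := fun g => ∃ (a b : ℕ) (k : ℤ), g = tau ^ a * xi ^ k * (tau ^ b)⁻¹) g ?_
  intro z
  · induction z using FreeGroup.induction_on with
    | C1 => exact ⟨0, 0, 0, by simp⟩
    | of x =>
        fin_cases x
        · exact ⟨0, 0, 1, by simp [xi]; rfl⟩
        · exact ⟨1, 0, 0, by simp [tau]; rfl⟩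
    | inv_of x hx =>
        obtain ⟨a, b, k, hk⟩ := hx
        refine ⟨b, a, -k, ?_⟩
        have : ((PresentedGroup.mk bs13Rels) (FreeGroup.of x))⁻¹
            = (tau ^ a * xi ^ k * (tau ^ b)⁻¹)⁻¹ := by rw [← hk]
        rw [map_inv, this]
        group
    | mul x y hx hy =>
        obtain ⟨a, b, k, hk⟩ := hx
        obtain ⟨c, d, m, hm⟩ := hy
        rw [map_mul, hk, hm]
        rcases le_total b c with hbc | hcb
        · refine ⟨a + (c - b), d, (3:ℤ) ^ (c - b) * k + m, ?_⟩
          have hc : tau ^ c = tau ^ b * tau ^ (c - b) := by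
            rw [← pow_add, Nat.add_sub_cancel' hbc]
          rw [hc]
          have : tau ^ a * xi ^ k * (tau ^ b)⁻¹ * (tau ^ b * tau ^ (c - b) * xi ^ m * (tau ^ d)⁻¹)
              = tau ^ a * (xi ^ k * tau ^ (c - b)) * xi ^ m * (tau ^ d)⁻¹ := by group
          rw [this, bs_push' (c-b) k]
          rw [pow_add, zpow_add]
          group
        · refine ⟨a, d + (b - c), k + (3:ℤ) ^ (b - c) * m, ?_⟩
          have hb : tau ^ b = tau ^ c * tau ^ (b - c) := by
            rw [← pow_add, Nat.add_sub_cancel' hcb]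
          rw [hb]
          have h1 : tau ^ a * xi ^ k * (tau ^ c * tau ^ (b-c))⁻¹ * (tau ^ c * xi ^ m * (tau ^ d)⁻¹)
              = tau ^ a * xi ^ k * ((tau ^ (b-c))⁻¹ * xi ^ m) * (tau ^ d)⁻¹ := by group
          rw [h1, bs_push'' (b-c) m]
          rw [pow_add, zpow_add]
          group

/-! ### The homomorphism BS13 → SapirLikeGroup -/

def fB : Fin 2 → SapirLikeGroup := ![XS, TS]

lemma hrelB : ∀ r ∈ bs13Rels, FreeGroup.lift fB r = 1 := by
  intro r hr
  rcases hr with rfl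
  simp only [map_mul, map_inv, map_pow, FreeGroup.lift_apply_of]
  rw [mul_inv_eq_one]
  show TS⁻¹ * XS * TS = XS ^ 3
  exact rel_X

def FB : BS13 →* SapirLikeGroup := PresentedGroup.toGroup hrelB

@[simp] lemma FB_xi : FB xi = XS := PresentedGroup.toGroup.of hrelB
@[simp] lemma FB_tau : FB tau = TS := PresentedGroup.toGroup.of hrelB

lemma Tp_pow_apply (n : ℕ) (u : ℚ) : (Tp ^ n) u = u / 3 ^ n := by
  induction n generalizing u with
  | zero => simp
  | succ m ih =>
      rw [pow_succ, Equiv.Perm.mul_apply, Tp_apply, ih]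
      rw [pow_succ]
      ring

lemma Tp_pow_inv_apply (n : ℕ) (u : ℚ) : ((Tp ^ n)⁻¹) u = u * 3 ^ n := by
  apply (Tp ^ n).injective
  rw [show (Tp ^ n) ((Tp ^ n)⁻¹ u) = u from (Tp ^ n).apply_symm_apply u, Tp_pow_apply]
  field_simp

lemma FB_injective : Function.Injective FB := by
  rw [injective_iff_map_eq_one]
  intro g hg
  obtain ⟨a, b, k, rfl⟩ := bs_normal_form g
  have hphi : Phi (FB (tau ^ a * xi ^ k * (tau ^ b)⁻¹)) = 1 := by rw [hg, map_one]
  simp only [map_mul, map_pow, map_inv, map_zpow, FB_xi, FB_tau, Phi_TS] at hphi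
  rw [Phi_XS, addRight_zpow] at hphi
  have heval : ∀ u : ℚ, (u * 3 ^ b + k) / 3 ^ a = u := by
    intro u
    have := congrArg (fun (e : Equiv.Perm ℚ) => e u) hphi
    simpa [Equiv.Perm.mul_apply, Tp_pow_apply, Tp_pow_inv_apply] using this
  have h0 := heval 0
  have hk : (k : ℚ) = 0 := by
    field_simp at h0
    simpa using h0
  have hk' : k = 0 := by exact_mod_cast hk
  have h1 := heval 1
  rw [hk] at h1
  have hab' : a = b := by
    have h2 : ((3:ℚ) ^ b) = 3 ^ a := by
      have h3 : ((3:ℚ) ^ a) ≠ 0 := by positivity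
      field_simp at h1
      first
      | (exact_mod_cast h1)
      | (rw [h1])
      | exact h1
    have : (3:ℕ) ^ b = 3 ^ a := by exact_mod_cast h2
    exact (Nat.pow_right_injective (by norm_num) this).symm
  subst hab'
  rw [hk']
  group

lemma FB_range : FB.range = Subgroup.closure {XS, TS} := by
  rw [MonoidHom.range_eq_map, ← PresentedGroup.closure_range_of bs13Rels,
    MonoidHom.map_closure]
  congr 1
  rw [← Set.range_comp]
  ext g
  constructor
  · rintro ⟨i, rfl⟩
    fin_cases i
    · left; exact FB_xi
    · right; exact FB_tau
  · rintro (rfl | rfl)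
    · exact ⟨0, FB_xi⟩
    · exact ⟨1, FB_tau⟩

/-- The subgroup `⟨ab, t⟩` of the Sapir-like group is isomorphic to BS(1,3). -/
noncomputable def subgroupEquiv :
    (Subgroup.closure {XS, TS} : Subgroup SapirLikeGroup) ≃* BS13 :=
  ((MonoidHom.ofInjective FB_injective).trans (MulEquiv.subgroupCongr FB_range)).symm

/-! ### Word length infrastructure -/

section WordLength

variable {G : Type*} [Group G] (S : Finset G)

def Ok (l : List G) : Prop := ∀ x ∈ l, x ∈ S ∨ x⁻¹ ∈ S

noncomputable def wl (g : G) : ℕ := sInf {n | ∃ l : List G, Ok S l ∧ l.prod = g ∧ l.length = n}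

variable {S}

lemma wl_le {l : List G} (h : Ok S l) : wl S l.prod ≤ l.length :=
  Nat.sInf_le ⟨l, h, rfl, rfl⟩

lemma exists_word (hS : Subgroup.closure (S : Set G) = ⊤) (g : G) :
    ∃ l : List G, Ok S l ∧ l.prod = g := by
  have hg : g ∈ Subgroup.closure (S : Set G) := hS ▸ Subgroup.mem_top g
  induction hg using Subgroup.closure_induction with
  | mem x hx => exact ⟨[x], fun y hy => by simp at hy; subst hy; exact Or.inl hx, by simp⟩
  | one => exact ⟨[], by simp [Ok], by simp⟩
  | mul x y hx hy ihx ihy =>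
      obtain ⟨l, hl, hpl⟩ := ihx
      obtain ⟨m, hm, hpm⟩ := ihy
      exact ⟨l ++ m, fun z hz => by
        rcases List.mem_append.mp hz with h | h
        exacts [hl z h, hm z h], by rw [List.prod_append, hpl, hpm]⟩
  | inv x hx ihx =>
      obtain ⟨l, hl, hpl⟩ := ihx
      refine ⟨(l.map (fun y => y⁻¹)).reverse, fun z hz => ?_, ?_⟩
      · rw [List.mem_reverse, List.mem_map] at hz
        obtain ⟨y, hy, rfl⟩ := hz
        rcases hl y hy with h | h
        · right; rw [inv_inv]; exact h
        · left; exact h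
      · rw [← List.prod_inv_reverse, hpl]

lemma wl_spec (hS : Subgroup.closure (S : Set G) = ⊤) (g : G) :
    ∃ l : List G, Ok S l ∧ l.prod = g ∧ l.length = wl S g := by
  have hne : {n | ∃ l : List G, Ok S l ∧ l.prod = g ∧ l.length = n}.Nonempty := by
    obtain ⟨l, hl, hp⟩ := exists_word hS g
    exact ⟨l.length, l, hl, hp, rfl⟩
  exact Nat.sInf_mem hne

lemma wl_one : wl S (1 : G) = 0 :=
  Nat.le_zero.mp (wl_le (l := []) (fun x hx => by simp at hx))

lemma wl_mul (hS : Subgroup.closure (S : Set G) = ⊤) (g h : G) :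
    wl S (g * h) ≤ wl S g + wl S h := by
  obtain ⟨l, hl, hpl, hll⟩ := wl_spec hS g
  obtain ⟨m, hm, hpm, hlm⟩ := wl_spec hS h
  have : g * h = (l ++ m).prod := by rw [List.prod_append, hpl, hpm]
  rw [this, ← hll, ← hlm, ← List.length_append]
  exact wl_le fun z hz => by
    rcases List.mem_append.mp hz with hzz | hzz
    exacts [hl z hzz, hm z hzz]

lemma wl_inv (hS : Subgroup.closure (S : Set G) = ⊤) (g : G) : wl S g⁻¹ = wl S g := by
  have key : ∀ a : G, wl S a⁻¹ ≤ wl S a := by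
    intro a
    obtain ⟨l, hl, hpl, hll⟩ := wl_spec hS a
    have : a⁻¹ = ((l.map (fun y => y⁻¹)).reverse).prod := by
      rw [← List.prod_inv_reverse, hpl]
    rw [this, ← hll]
    have hlen : ((l.map (fun y => y⁻¹)).reverse).length = l.length := by simp
    rw [← hlen]
    refine wl_le fun z hz => ?_
    rw [List.mem_reverse, List.mem_map] at hz
    obtain ⟨y, hy, rfl⟩ := hz
    rcases hl y hy with h | h
    · right; rw [inv_inv]; exact h
    · left; exact h
  exact le_antisymm (by simpa using key g) (by simpa using key g⁻¹)

lemma wordDist_eq (hS : Subgroup.closure (S : Set G) = ⊤) (g h : G) :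
    wordDist S g h = (wl S (g⁻¹ * h) : ℝ) := by
  apply IsLeast.csInf_eq
  constructor
  · obtain ⟨l, hl, hpl, hll⟩ := wl_spec hS (g⁻¹ * h)
    exact ⟨l, hl, hpl, by rw [hll]⟩
  · rintro r ⟨l, hl, hpl, rfl⟩
    exact_mod_cast hpl ▸ wl_le hl

lemma finite_ball (hS : Subgroup.closure (S : Set G) = ⊤) (n : ℕ) :
    {g : G | wl S g ≤ n}.Finite := by
  induction n with
  | zero =>
      apply Set.Finite.subset (Set.finite_singleton (1 : G))
      intro g hg
      simp only [Set.mem_setOf_eq, Nat.le_zero] at hg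
      obtain ⟨l, hl, hpl, hll⟩ := wl_spec hS g
      rw [hg, List.length_eq_zero_iff] at hll
      rw [hll] at hpl
      simp at hpl
      simp [← hpl]
  | succ m ih =>
      have hT : (↑S ∪ (fun x : G => x⁻¹) '' ↑S : Set G).Finite :=
        (S.finite_toSet).union (S.finite_toSet.image _)
      apply Set.Finite.subset
        (ih.union (Set.Finite.biUnion hT
          (fun s _ => ih.image (fun g => g * s))))
      intro g hg
      simp only [Set.mem_setOf_eq] at hg
      obtain ⟨l, hl, hpl, hll⟩ := wl_spec hS g
      rcases List.eq_nil_or_concat l with rfl | ⟨L, b, rfl⟩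
      · left
        simp only [Set.mem_setOf_eq]
        simp at hpl
        rw [← hpl, wl_one]
        exact Nat.zero_le m
      · right
        have hOkL : Ok S L := fun z hz => hl z (by rw [List.concat_eq_append, List.mem_append]; exact Or.inl hz)
        have hbmem : b ∈ (↑S ∪ (fun x : G => x⁻¹) '' ↑S : Set G) := by
          rcases hl b (by rw [List.concat_eq_append, List.mem_append]; simp) with h | h
          · exact Or.inl h
          · exact Or.inr ⟨b⁻¹, h, by simp⟩
        refine Set.mem_biUnion hbmem ⟨L.prod, ?_, by simpa using (List.prod_concat (l := L) (a := b)) ▸ hpl⟩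
        simp only [Set.mem_setOf_eq]
        have : wl S L.prod ≤ L.length := wl_le hOkL
        have hlen : L.length + 1 = (L.concat b).length := by simp
        omega

end WordLength

/-! ### Hyperbolicity consequences -/

section Hyp

variable {G : Type*} [Group G] {S : Finset G} {δ : ℝ}

/-- distance -/
noncomputable def dd (S : Finset G) (g h : G) : ℝ := (wl S (g⁻¹ * h) : ℝ)

lemma dd_nonneg (g h : G) : 0 ≤ dd S g h := Nat.cast_nonneg _

lemma dd_symm (hS : Subgroup.closure (S : Set G) = ⊤) (g h : G) : dd S g h = dd S h g := by
  unfold dd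
  rw [show h⁻¹ * g = (g⁻¹ * h)⁻¹ by group, wl_inv hS]

lemma dd_self (g : G) : dd S g g = 0 := by
  unfold dd; rw [inv_mul_cancel, wl_one]; simp

lemma dd_triangle (hS : Subgroup.closure (S : Set G) = ⊤) (g h k : G) :
    dd S g k ≤ dd S g h + dd S h k := by
  unfold dd
  rw [show g⁻¹ * k = (g⁻¹ * h) * (h⁻¹ * k) by group]
  exact_mod_cast wl_mul hS _ _

/-- Gromov product based at `w`. -/
noncomputable def gp (S : Finset G) (w a b : G) : ℝ :=
  (dd S w a + dd S w b - dd S a b) / 2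

/-- 4-point condition in `dd` form. -/
def Hyp4 (S : Finset G) (δ : ℝ) : Prop :=
  ∀ x y z t : G, dd S x z + dd S y t ≤ max (dd S x y + dd S z t) (dd S x t + dd S y z) + δ

lemma gp_ineq (hS : Subgroup.closure (S : Set G) = ⊤) (h4 : Hyp4 S δ) (w a b c : G) :
    min (gp S w a b) (gp S w b c) - δ / 2 ≤ gp S w a c := by
  have h := h4 a b c w
  unfold gp
  rcases max_cases (dd S a b + dd S c w) (dd S a w + dd S b c) with ⟨hm, _⟩ | ⟨hm, _⟩ <;>
    rw [hm] at h <;>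
  · rcases min_cases ((dd S w a + dd S w b - dd S a b) / 2)
      ((dd S w b + dd S w c - dd S b c) / 2) with ⟨hmin, _⟩ | ⟨hmin, _⟩ <;>
      rw [hmin] <;>
      [skip; skip] <;>
      nlinarith [dd_symm hS a w, dd_symm hS b w, dd_symm hS c w,
        dd_triangle hS w a b, dd_triangle hS w b c, dd_nonneg (S := S) w a,
        dd_nonneg (S := S) w b, dd_nonneg (S := S) w c]

/-- Key lemma: a conjugacy-minimal long element has `ℓ(g²) ≥ 2ℓ(g) - (2δ+2)`. -/
lemma conj_min_sq (hS : Subgroup.closure (S : Set G) = ⊤) (h4 : Hyp4 S δ) (hδ : 0 ≤ δ)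
    {g : G} (hmin : ∀ u : G, wl S g ≤ wl S (u⁻¹ * g * u))
    (hbig : 2 * (Nat.floor δ + 1) ≤ wl S g) :
    2 * (wl S g : ℝ) - (2 * δ + 2) ≤ (wl S (g * g) : ℝ) := by
  by_contra hcon
  push_neg at hcon
  set n := wl S g with hn
  set j : ℕ := Nat.floor δ + 1 with hj
  have hj2 : 2 * j ≤ n := hbig
  have hjδ : (δ : ℝ) < (j : ℝ) := by
    rw [hj]; push_cast; exact Nat.lt_floor_add_one δ
  have hjδ' : (j : ℝ) ≤ δ + 1 := by
    rw [hj]; push_cast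
    have := Nat.floor_le hδ
    linarith
  obtain ⟨l, hOk, hprod, hlen⟩ := wl_spec hS g
  set u : G := (l.take j).prod with hu
  set v : G := (l.take (n - j)).prod with hv
  -- basic word-length facts
  have take_ok : ∀ m : ℕ, Ok S (l.take m) := fun m x hx => hOk x (List.take_subset m l hx)
  have hwlu : wl S u ≤ j := by
    have := wl_le (take_ok j)
    rwa [List.length_take, hlen, min_eq_left (by omega)] at this
  have hug : u⁻¹ * g = (l.drop j).prod := by
    rw [← hprod]
    conv_lhs => rw [← List.take_append_drop j l]
    rw [List.prod_append, hu]
    group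
  have hwlug : wl S (u⁻¹ * g) ≤ n - j := by
    rw [hug]
    have := wl_le (fun x hx => hOk x (List.drop_subset j l hx))
    rwa [List.length_drop, hlen] at this
  have hsplit : n ≤ wl S u + wl S (u⁻¹ * g) := by
    have h1 : g = u * (u⁻¹ * g) := by group
    calc n = wl S g := rfl
      _ = wl S (u * (u⁻¹ * g)) := by rw [← h1]
      _ ≤ _ := wl_mul hS _ _
  have hwlu' : wl S u = j := by omega
  have hwlug' : wl S (u⁻¹ * g) = n - j := by omega
  -- same for v
  have hwlv : wl S v ≤ n - j := by
    have := wl_le (take_ok (n - j))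
    rwa [List.length_take, hlen, min_eq_left (by omega)] at this
  have hvg : v⁻¹ * g = (l.drop (n - j)).prod := by
    rw [← hprod]
    conv_lhs => rw [← List.take_append_drop (n - j) l]
    rw [List.prod_append, hv]
    group
  have hwlvg : wl S (v⁻¹ * g) ≤ j := by
    rw [hvg]
    have := wl_le (fun x hx => hOk x (List.drop_subset (n - j) l hx))
    rw [List.length_drop, hlen] at this
    omega
  have hsplitv : n ≤ wl S v + wl S (v⁻¹ * g) := by
    have h1 : g = v * (v⁻¹ * g) := by group
    calc n = wl S g := rfl
      _ = wl S (v * (v⁻¹ * g)) := by rw [← h1]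
      _ ≤ _ := wl_mul hS _ _
  have hwlv' : wl S v = n - j := by omega
  have hwlvg' : wl S (v⁻¹ * g) = j := by omega
  -- middle segment
  have hmid : u⁻¹ * v = ((l.take (n - j)).drop j).prod := by
    have h1 : l.take (n - j) = (l.take (n-j)).take j ++ (l.take (n-j)).drop j :=
      (List.take_append_drop j (l.take (n - j))).symm
    have h2 : (l.take (n-j)).take j = l.take j := by
      rw [List.take_take, min_eq_left (by omega)]
    rw [hv]
    conv_lhs => rw [h1, h2]
    rw [List.prod_append, hu]
    group
  have hwlmid : wl S (u⁻¹ * v) ≤ n - 2 * j := by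
    rw [hmid]
    have := wl_le (fun x hx => hOk x
      (List.take_subset (n-j) l (List.drop_subset j (l.take (n-j)) hx)))
    rw [List.length_drop, List.length_take, hlen, min_eq_left (by omega)] at this
    omega
  -- now real arithmetic with Gromov products
  set P := v with hP
  set Q := g * u with hQdef
  have dgP : dd S g P = (j:ℝ) := by
    unfold dd
    rw [show g⁻¹ * P = (P⁻¹ * g)⁻¹ by group, wl_inv hS, hP, hwlvg']
  have dP1 : dd S P (1:G) = (n:ℝ) - j := by
    rw [dd_symm hS]
    unfold dd
    rw [inv_one, one_mul, hP, hwlv', Nat.cast_sub (by omega)]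
  have dg1 : dd S g (1:G) = (n:ℝ) := by
    unfold dd
    rw [mul_one, wl_inv hS]
  have dgQ : dd S g Q = (j:ℝ) := by
    unfold dd
    rw [hQdef, show g⁻¹ * (g * u) = u by group, hwlu']
  have dQg2 : dd S Q (g * g) = (n:ℝ) - j := by
    unfold dd
    rw [hQdef, show (g * u)⁻¹ * (g * g) = u⁻¹ * g by group, hwlug',
      Nat.cast_sub (by omega)]
  have dgg2 : dd S g (g * g) = (n:ℝ) := by
    unfold dd
    rw [show g⁻¹ * (g * g) = g by group]
  have d1g2 : dd S (1:G) (g * g) = (wl S (g*g) : ℝ) := by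
    unfold dd
    rw [inv_one, one_mul]
  have duP : dd S u P ≤ (n:ℝ) - 2 * j := by
    unfold dd
    rw [hP]
    calc (wl S (u⁻¹ * v) : ℝ) ≤ ((n - 2*j : ℕ) : ℝ) := by exact_mod_cast hwlmid
      _ = (n:ℝ) - 2*j := by rw [Nat.cast_sub (by omega)]; push_cast; ring
  have duQ : (n:ℝ) ≤ dd S u Q := by
    unfold dd
    rw [hQdef, show u⁻¹ * (g * u) = u⁻¹ * g * u by group]
    exact_mod_cast hmin u
  -- Gromov products
  have hgpP1 : gp S g P 1 = (j:ℝ) := by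
    unfold gp
    rw [dgP, dg1, show dd S P 1 = (n:ℝ) - j from dP1]
    ring
  have hgpQg2 : gp S g (g*g) Q = (j:ℝ) := by
    unfold gp
    rw [dgg2, dgQ, dd_symm hS (g*g) Q, dQg2]
    ring
  have hrho : gp S g 1 (g*g) = ((n:ℝ) + n - wl S (g*g)) / 2 := by
    unfold gp
    rw [dg1, dgg2, d1g2]
  have hjrho : (j : ℝ) ≤ gp S g 1 (g*g) := by
    rw [hrho]; linarith
  have h1 := gp_ineq hS h4 g P 1 (g*g)
  have h2 := gp_ineq hS h4 g P (g*g) Q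
  rw [hgpP1] at h1
  rw [hgpQg2] at h2
  have hgpPg2 : (j:ℝ) - δ/2 ≤ gp S g P (g*g) := by
    rcases min_cases ((j:ℝ)) (gp S g 1 (g*g)) with ⟨hm, _⟩ | ⟨hm, _⟩ <;>
      rw [hm] at h1 <;> linarith
  have hgpPQ : (j:ℝ) - δ ≤ gp S g P Q := by
    rcases min_cases (gp S g P (g*g)) ((j:ℝ)) with ⟨hm, _⟩ | ⟨hm, _⟩ <;>
      rw [hm] at h2 <;> linarith
  have hdPQ : dd S P Q ≤ 2 * δ := by
    have : gp S g P Q = ((j:ℝ) + j - dd S P Q) / 2 := by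
      unfold gp; rw [dgP, dgQ]
    rw [this] at hgpPQ
    linarith
  have htri := dd_triangle hS u P Q
  linarith [hjδ]

/-- Broken-geodesic growth lemma: if `ℓ(g²) ≥ 2ℓ(g) - R` and `ℓ(g) > R + δ`,
then powers of `g` grow linearly. -/
lemma growth (hS : Subgroup.closure (S : Set G) = ⊤) (h4 : Hyp4 S δ) (hδ : 0 ≤ δ)
    {g : G} {R : ℝ} (hR : 0 ≤ R)
    (hsq : 2 * (wl S g : ℝ) - R ≤ (wl S (g * g) : ℝ))
    (hL : R + δ < (wl S g : ℝ)) :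
    ∀ i : ℕ, (i : ℝ) * ((wl S g : ℝ) - R - δ) ≤ (wl S (g ^ i) : ℝ) := by
  set L : ℝ := (wl S g : ℝ) with hLdef
  have gap : ∀ i : ℕ, (wl S (g ^ i) : ℝ) + (L - R - δ) ≤ (wl S (g ^ (i+1)) : ℝ) := by
    intro i
    induction i with
    | zero =>
        have hg1 : g ^ (0+1) = g := by rw [pow_one]
        rw [pow_zero, wl_one, hg1]
        push_cast
        linarith
    | succ m ih =>
        have h := h4 (1 : G) (g ^ m) (g ^ (m+1)) (g ^ (m+2))
        have e1 : (1:G)⁻¹ * g ^ (m+1) = g ^ (m+1) := by group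
        have e2 : (g ^ m)⁻¹ * g ^ (m+2) = g * g := by
          have h22 : g ^ (m+2) = g ^ m * (g * g) := by rw [pow_add, pow_two]
          rw [h22]
          simp [mul_assoc]
        have e3 : (1:G)⁻¹ * g ^ m = g ^ m := by group
        have e4 : (g ^ (m+1))⁻¹ * g ^ (m+2) = g := by
          rw [show m+2 = (m+1)+1 by ring, pow_add]
          group
        have e5 : (1:G)⁻¹ * g ^ (m+2) = g ^ (m+2) := by group
        have e6 : (g ^ m)⁻¹ * g ^ (m+1) = g := by
          rw [pow_add]
          group
        unfold dd at h
        rw [e1, e2, e3, e4, e5, e6] at h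
        rcases max_cases ((wl S (g^m) : ℝ) + (wl S g : ℝ))
          ((wl S (g^(m+2)) : ℝ) + (wl S g : ℝ)) with ⟨hm', _⟩ | ⟨hm', _⟩ <;>
          rw [hm'] at h
        · exfalso
          linarith
        · have : (m:ℝ)+1+1 = (m:ℝ)+2 := by ring
          push_cast
          push_cast at h ih
          linarith
  intro i
  induction i with
  | zero => simp [wl_one]
  | succ m ih =>
      have := gap m
      push_cast
      push_cast at ih this
      linarith

end Hyp

section Main

variable {G : Type*} [Group G]

lemma wl_pow {S : Finset G} (hS : Subgroup.closure (S : Set G) = ⊤) (g : G) (p : ℕ) :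
    wl S (g ^ p) ≤ p * wl S g := by
  induction p with
  | zero => simp [wl_one]
  | succ m ih =>
      calc wl S (g ^ (m+1)) = wl S (g ^ m * g) := by rw [pow_succ]
        _ ≤ wl S (g ^ m) + wl S g := wl_mul hS _ _
        _ ≤ m * wl S g + wl S g := by omega
        _ = (m+1) * wl S g := by ring

lemma sq_le_three_pow (p : ℕ) : p * p ≤ 3 ^ p := by
  induction p with
  | zero => norm_num
  | succ m ih =>
      have h2 : m < 2 ^ m := Nat.lt_two_pow_self
      have h3 : 2 ^ m ≤ 3 ^ m := Nat.pow_le_pow_left (by norm_num) m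
      have : 3 ^ (m+1) = 3 * 3 ^ m := by rw [pow_succ]; ring
      nlinarith

theorem not_hyperbolic : ¬ IsWordHyperbolic SapirLikeGroup := by
  rintro ⟨S, δ, hδ, hS, h4'⟩
  have h4 : Hyp4 S δ := by
    intro x y z t
    have := h4' x y z t
    rwa [wordDist_eq hS, wordDist_eq hS, wordDist_eq hS, wordDist_eq hS,
      wordDist_eq hS, wordDist_eq hS] at this
  -- every positive power of XS is conjugate to a short element
  have key : ∀ k : ℕ, ∃ v : SapirLikeGroup,
      (wl S (v⁻¹ * XS ^ k * v) : ℝ) ≤ 3 * δ + 2 := by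
    intro k
    by_contra hbad
    push_neg at hbad
    -- minimal conjugate
    set Cset : Set ℕ := {m | ∃ v : SapirLikeGroup, wl S (v⁻¹ * XS ^ k * v) = m} with hCset
    have hCne : Cset.Nonempty := ⟨wl S (1⁻¹ * XS ^ k * 1), 1, rfl⟩
    obtain ⟨v, hv⟩ : sInf Cset ∈ Cset := Nat.sInf_mem hCne
    set g : SapirLikeGroup := v⁻¹ * XS ^ k * v with hgdef
    have hmin : ∀ u : SapirLikeGroup, wl S g ≤ wl S (u⁻¹ * g * u) := by
      intro u
      rw [hv]
      apply Nat.sInf_le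
      exact ⟨v * u, by rw [hgdef]; group⟩
    have hglong : 3 * δ + 2 < (wl S g : ℝ) := hbad v
    have hbig : 2 * (Nat.floor δ + 1) ≤ wl S g := by
      have h1 : ((2 * (Nat.floor δ + 1) : ℕ) : ℝ) ≤ 3 * δ + 2 := by
        push_cast
        have := Nat.floor_le hδ
        linarith
      exact_mod_cast h1.trans_lt hglong |>.le
    have hsq := conj_min_sq hS h4 hδ hmin hbig
    have hgrow := growth hS h4 hδ (R := 2*δ+2) (by linarith) hsq (by linarith)
    -- upper bound on powers
    have hup : ∀ p : ℕ, (wl S (g ^ (3 ^ p)) : ℝ) ≤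
        2 * wl S v + wl S (XS ^ k) + 2 * (p * wl S TS) := by
      intro p
      have hc : (v⁻¹ * XS ^ k * v) ^ (3^p) = v⁻¹ * (XS ^ k) ^ (3^p) * v := by
        have := conj_pow (a := v⁻¹) (b := XS ^ k) (i := 3^p)
        rwa [inv_inv] at this
      have hpush : XS ^ (3 ^ p * k) = (TS ^ p)⁻¹ * XS ^ k * TS ^ p := by
        have h1 := rel_X_pow_push p (k : ℤ)
        rw [zpow_natCast] at h1
        rw [show ((3:ℤ)^p * (k:ℤ)) = ((3^p * k : ℕ) : ℤ) by push_cast; ring,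
          zpow_natCast] at h1
        exact h1.symm
      have hconj : g ^ (3 ^ p) = v⁻¹ * ((TS ^ p)⁻¹ * XS ^ k * TS ^ p) * v := by
        rw [hgdef, hc, ← pow_mul, show k * 3 ^ p = 3 ^ p * k from mul_comm _ _, hpush]
      rw [hconj]
      have step : wl S (v⁻¹ * ((TS ^ p)⁻¹ * XS ^ k * TS ^ p) * v)
          ≤ wl S v + (wl S (TS ^ p) + wl S (XS ^ k) + wl S (TS ^ p)) + wl S v := by
        calc wl S (v⁻¹ * ((TS ^ p)⁻¹ * XS ^ k * TS ^ p) * v)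
            ≤ wl S (v⁻¹ * ((TS ^ p)⁻¹ * XS ^ k * TS ^ p)) + wl S v := wl_mul hS _ _
          _ ≤ wl S v⁻¹ + wl S ((TS ^ p)⁻¹ * XS ^ k * TS ^ p) + wl S v := by
              have h := wl_mul hS (v⁻¹) ((TS ^ p)⁻¹ * XS ^ k * TS ^ p)
              exact Nat.add_le_add_right h _
          _ ≤ wl S v⁻¹ + (wl S ((TS ^ p)⁻¹ * XS ^ k) + wl S (TS ^ p)) + wl S v := by
              have h := wl_mul hS ((TS ^ p)⁻¹ * XS ^ k) (TS ^ p)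
              exact Nat.add_le_add_right (Nat.add_le_add_left h _) _
          _ ≤ wl S v⁻¹ + (wl S (TS ^ p)⁻¹ + wl S (XS ^ k) + wl S (TS ^ p)) + wl S v := by
              have h := wl_mul hS ((TS ^ p)⁻¹) (XS ^ k)
              exact Nat.add_le_add_right (Nat.add_le_add_left
                (Nat.add_le_add_right h _) _) _
          _ = wl S v + (wl S (TS ^ p) + wl S (XS ^ k) + wl S (TS ^ p)) + wl S v := by
              rw [wl_inv hS, wl_inv hS]
      have hTp : wl S (TS ^ p) ≤ p * wl S TS := wl_pow hS TS p
      have : wl S (v⁻¹ * ((TS ^ p)⁻¹ * XS ^ k * TS ^ p) * v)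
          ≤ 2 * wl S v + wl S (XS ^ k) + 2 * (p * wl S TS) := by omega
      exact_mod_cast this
    -- contradiction: linear growth beats exponential lower bound
    set ε : ℝ := (wl S g : ℝ) - (3*δ + 2) with hε
    have hεpos : 0 < ε := by rw [hε]; linarith
    set Cr : ℝ := 2 * wl S v + wl S (XS ^ k) with hCr
    set Br : ℝ := 2 * wl S TS with hBr
    have hCr0 : 0 ≤ Cr := by rw [hCr]; positivity
    have hBr0 : 0 ≤ Br := by rw [hBr]; positivity
    obtain ⟨N, hN⟩ := exists_nat_gt (max ((Cr + Br)/ε) 1)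
    have hN1 : (N:ℝ) > (Cr + Br)/ε := lt_of_le_of_lt (le_max_left _ _) hN
    have hN2 : (N:ℝ) > 1 := lt_of_le_of_lt (le_max_right _ _) hN
    have hNe : (N:ℝ) * ε > Cr + Br := by
      rw [gt_iff_lt, ← div_lt_iff₀ hεpos]
      exact hN1
    have hsq3 : ((N:ℝ)) * N ≤ (3:ℝ) ^ N := by exact_mod_cast sq_le_three_pow N
    have hlow := hgrow (3 ^ N)
    have hupN := hup N
    have hc3 : ((3 ^ N : ℕ) : ℝ) = (3:ℝ) ^ N := by push_cast; ring
    rw [hc3] at hlow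
    have hend : (3:ℝ) ^ N * ε ≤ Cr + N * Br := by
      calc (3:ℝ) ^ N * ε = (3:ℝ)^N * ((wl S g : ℝ) - (2*δ+2) - δ) := by rw [hε]; ring_nf
        _ ≤ (wl S (g ^ (3^N)) : ℝ) := hlow
        _ ≤ Cr + N * Br := by
            rw [hCr, hBr]
            push_cast at hupN ⊢
            linarith
    nlinarith [hsq3, hNe, hN2, hεpos, hCr0, hBr0]
  -- pigeonhole among conjugates
  classical
  set M : ℕ := Nat.floor (3*δ+2) with hM
  have hball := finite_ball (S := S) hS M
  set Bf : Finset SapirLikeGroup := hball.toFinset with hBf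
  set V : ℕ := Bf.card with hV
  set K : ℕ := V + 1 with hK
  set cf : ℕ → SapirLikeGroup := fun k => Classical.choose (key k) with hcf
  set hf : ℕ → SapirLikeGroup := fun k => (cf k)⁻¹ * XS ^ k * (cf k) with hhf
  have hmem : ∀ k ∈ Finset.Icc K (K+V), hf k ∈ Bf := by
    intro k _
    have hspec := Classical.choose_spec (key k)
    rw [hBf, Set.Finite.mem_toFinset]
    simp only [Set.mem_setOf_eq]
    exact Nat.le_floor hspec
  have hcard : Bf.card < (Finset.Icc K (K+V)).card := by
    rw [Nat.card_Icc]
    omega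
  obtain ⟨k₁, hk₁, k₂, hk₂, hne, heq⟩ :=
    Finset.exists_ne_map_eq_of_card_lt_of_maps_to hcard hmem
  rw [Finset.mem_Icc] at hk₁ hk₂
  -- derive conjugacy of XS^k₁ and XS^k₂
  have hconj : XS ^ k₂ = (cf k₂ * (cf k₁)⁻¹) * XS ^ k₁ * (cf k₂ * (cf k₁)⁻¹)⁻¹ := by
    have h := heq
    rw [hhf] at h
    simp only at h
    calc XS ^ k₂ = cf k₂ * ((cf k₂)⁻¹ * XS ^ k₂ * cf k₂) * (cf k₂)⁻¹ := by group
      _ = cf k₂ * ((cf k₁)⁻¹ * XS ^ k₁ * cf k₁) * (cf k₂)⁻¹ := by rw [← h]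
      _ = (cf k₂ * (cf k₁)⁻¹) * XS ^ k₁ * (cf k₂ * (cf k₁)⁻¹)⁻¹ := by group
  -- apply the affine representation
  set w : SapirLikeGroup := cf k₂ * (cf k₁)⁻¹ with hw
  have hPhi := congrArg Phi hconj
  rw [map_mul, map_mul, map_inv] at hPhi
  have hXp : ∀ m : ℕ, Phi (XS ^ m) = Equiv.addRight (m : ℚ) := by
    intro m
    rw [← zpow_natCast XS m, Phi_XS_zpow]
    norm_num
  rw [hXp, hXp] at hPhi
  obtain ⟨q, c, hqc⟩ := Phi_mem_affSG w
  have heval := congrArg (fun (e : Equiv.Perm ℚ) => e (Phi w 0)) hPhi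
  simp only [Equiv.Perm.mul_apply, Equiv.coe_addRight,
    show ∀ x, (Phi w)⁻¹ ((Phi w) x) = x from (Phi w).symm_apply_apply] at heval
  rw [zero_add, hqc 0, hqc (k₁ : ℚ)] at heval
  have hkey : (k₂ : ℚ) = 3 ^ q * k₁ := by
    rw [mul_zero, zero_add] at heval
    linarith
  -- final contradiction
  have hK1 : K ≤ k₁ ∧ k₁ ≤ K + V := hk₁
  have hK2 : K ≤ k₂ ∧ k₂ ≤ K + V := hk₂
  rcases q with m | m
  · rw [show ((Int.ofNat m : ℤ)) = (m : ℤ) from rfl, zpow_natCast] at hkey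
    have hnat : k₂ = 3 ^ m * k₁ := by exact_mod_cast hkey
    rcases Nat.eq_zero_or_pos m with rfl | hm
    · simp at hnat; omega
    · have h3 : 3 ≤ 3 ^ m := by
        calc 3 = 3 ^ 1 := by norm_num
          _ ≤ 3 ^ m := Nat.pow_le_pow_right (by norm_num) hm
      have : 3 * k₁ ≤ 3 ^ m * k₁ := Nat.mul_le_mul_right _ h3
      omega
  · rw [zpow_negSucc] at hkey
    have hkey2 : (k₂ : ℚ) * (3 ^ (m+1)) = k₁ := by
      rw [hkey]
      field_simp
    have hnat : k₂ * 3 ^ (m+1) = k₁ := by exact_mod_cast hkey2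
    have h3 : 3 ≤ 3 ^ (m+1) := by
      calc 3 = 3 ^ 1 := by norm_num
        _ ≤ 3 ^ (m+1) := Nat.pow_le_pow_right (by norm_num) (by omega)
    have : k₂ * 3 ≤ k₂ * 3 ^ (m+1) := Nat.mul_le_mul_left _ h3
    omega

end Main

end Sapir15


/-- For `G = ⟨a,b,t | t⁻¹at = aba, t⁻¹bt = bab⟩`: the defining endomorphism `ψ` of `F(a,b)`
satisfies `ψ(ab) = (ab)³`, the subgroup `⟨ab, t⟩ ≤ G` is isomorphic to `BS(1,3)`, and
consequently `G` is not word-hyperbolic. -/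
theorem stmt_15 :
    (∀ ψ : FreeGroup Bool →* FreeGroup Bool,
      ψ (FreeGroup.of true) = FreeGroup.of true * FreeGroup.of false * FreeGroup.of true →
      ψ (FreeGroup.of false) = FreeGroup.of false * FreeGroup.of true * FreeGroup.of false →
      ψ (FreeGroup.of true * FreeGroup.of false) =
        (FreeGroup.of true * FreeGroup.of false) ^ 3) ∧
    Nonempty
      ((Subgroup.closure
          {(PresentedGroup.of 0 : SapirLikeGroup) * PresentedGroup.of 1,
           (PresentedGroup.of 2 : SapirLikeGroup)} : Subgroup SapirLikeGroup) ≃* BS13) ∧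
    ¬ IsWordHyperbolic SapirLikeGroup := by
  refine ⟨?_, ⟨?_⟩, ?_⟩
  · intro ψ ha hb
    rw [map_mul, ha, hb]
    rw [pow_succ, pow_succ, pow_one]
    group
  · exact Sapir15.subgroupEquiv
  · exact Sapir15.not_hyperbolic
end
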